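/- Let $D$ be finite, $p_0$ strictly positive on $D$, $u : D \to \mathbb{R}$, and define the worst-case probability $\underline{p}(s) = p_0(s)\big(1 + \sqrt{d}\,(\mathbb{E}_0[u] - u(s))/\mathbb{S}_0[u]\big)$ for nonconstant $u$ and $d > 0$ with $(1+d) < \min_s 1/(1-p_0(s))$. Then the Lagrange multipliers $\underline{\nu} = \mathbb{E}_0[u] + \mathbb{S}_0[u]/\sqrt{d}$ and $\underline{\eta} = \mathbb{S}_0[u]/(2\sqrt{d})$ satisfy $u(s) - \underline{\nu} + 2\underline{\eta}\,\underline{p}(s)/p_0(s) = 0$ for every $s \in D$, i.e., the KKT stationarity condition for minimizing $\sum_s p(s) u(s)$ over the constraint set $\{p \geq 0, \sum p = 1, \sum p^2/p_0 \leq 1+d\}$ holds at $\underline{p}$ with $\underline{\eta} > 0$ and binding divergence constraint $\sum_s \underline{p}(s)^2/p_0(s) = 1+d$. -/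

import Mathlib

/-- Expectation of `u` under the probability mass function `p`. -/
noncomputable def expct {D : Type*} [Fintype D] (p u : D → ℝ) : ℝ := ∑ s, p s * u s

/-- Variance of `u` under the probability mass function `p`. -/
noncomputable def var0 {D : Type*} [Fintype D] (p u : D → ℝ) : ℝ :=
  ∑ s, p s * (u s - expct p u) ^ 2

/-- Standard deviation of `u` under the probability mass function `p`. -/
noncomputable def sdev {D : Type*} [Fintype D] (p u : D → ℝ) : ℝ :=
  Real.sqrt (var0 p u)

lemma var_pos {D : Type*} [Fintype D] (p0 : D → ℝ) (hpos : ∀ s, 0 < p0 s)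
    (u : D → ℝ) (hu : ∃ s t, u s ≠ u t) : 0 < var0 p0 u := by
  obtain ⟨s, t, hst⟩ := hu
  have hnn : ∀ x ∈ Finset.univ, (0:ℝ) ≤ p0 x * (u x - expct p0 u)^2 :=
    fun x _ => mul_nonneg (hpos x).le (sq_nonneg _)
  rcases lt_or_eq_of_le (Finset.sum_nonneg hnn) with h | h
  · exact h
  · exfalso
    have hz := (Finset.sum_eq_zero_iff_of_nonneg hnn).mp h.symm
    have hc : ∀ x : D, u x = expct p0 u := by
      intro x
      have := hz x (Finset.mem_univ x)
      have h2 : (u x - expct p0 u)^2 = 0 :=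
        (mul_eq_zero.mp this).resolve_left (hpos x).ne'
      have := pow_eq_zero_iff (n := 2) (by norm_num) |>.mp h2
      linarith
    exact hst ((hc s).trans (hc t).symm)

lemma aux_sq (a q S E x : ℝ) (ha : a ≠ 0) (hS : S ≠ 0) :
    (a * (1 + q * (E - x) / S))^2 / a
      = a + 2*q/S*(a*(E-x)) + q^2/S^2*(a*(E-x)^2) := by
  field_simp
  ring

theorem stmt_18 {D : Type*} [Fintype D]
    (p0 : D → ℝ) (hpos : ∀ s, 0 < p0 s) (hsum : ∑ s, p0 s = 1)
    (u : D → ℝ) (hu : ∃ s t, u s ≠ u t)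
    (d : ℝ) (hd : 0 < d) (hc : ∀ s, 1 + d < 1 / (1 - p0 s))
    (pmin : D → ℝ)
    (hpmin : ∀ s, pmin s =
      p0 s * (1 + Real.sqrt d * (expct p0 u - u s) / sdev p0 u))
    (ν η : ℝ)
    (hν : ν = expct p0 u + sdev p0 u / Real.sqrt d)
    (hη : η = sdev p0 u / (2 * Real.sqrt d)) :
    (∀ s, u s - ν + 2 * η * pmin s / p0 s = 0) ∧
      0 < η ∧
      ∑ s, (pmin s) ^ 2 / p0 s = 1 + d := by
  have hV : 0 < var0 p0 u := var_pos p0 hpos u hu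
  have hSpos : 0 < sdev p0 u := Real.sqrt_pos.mpr hV
  have hS2 : (sdev p0 u)^2 = var0 p0 u := Real.sq_sqrt hV.le
  have hq : 0 < Real.sqrt d := Real.sqrt_pos.mpr hd
  have hq2 : (Real.sqrt d)^2 = d := Real.sq_sqrt hd.le
  refine ⟨?_, ?_, ?_⟩
  · intro s
    have h0 : p0 s ≠ 0 := (hpos s).ne'
    rw [hpmin s, hν, hη]
    field_simp
    ring
  · rw [hη]; positivity
  · have key : ∀ s, pmin s ^ 2 / p0 s
        = p0 s + 2*Real.sqrt d/(sdev p0 u)*(p0 s*(expct p0 u - u s))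
          + (Real.sqrt d)^2/(sdev p0 u)^2*(p0 s*(expct p0 u - u s)^2) := by
      intro s
      rw [hpmin s]
      exact aux_sq _ _ _ _ _ (hpos s).ne' hSpos.ne'
    have h1 : ∑ s, p0 s * (expct p0 u - u s) = 0 := by
      have he : ∀ s : D, p0 s * (expct p0 u - u s)
          = p0 s * expct p0 u - p0 s * u s := fun s => by ring
      simp only [he, Finset.sum_sub_distrib, ← Finset.sum_mul, hsum, one_mul]
      simp [expct]
    have h2 : ∑ s, p0 s * (expct p0 u - u s)^2 = var0 p0 u := by
      unfold var0
      exact Finset.sum_congr rfl fun s _ => by ring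
    calc ∑ s, pmin s ^ 2 / p0 s
        = ∑ s, (p0 s + 2*Real.sqrt d/(sdev p0 u)*(p0 s*(expct p0 u - u s))
          + (Real.sqrt d)^2/(sdev p0 u)^2*(p0 s*(expct p0 u - u s)^2)) :=
          Finset.sum_congr rfl fun s _ => key s
      _ = (∑ s, p0 s) + 2*Real.sqrt d/(sdev p0 u) * (∑ s, p0 s*(expct p0 u - u s))
          + (Real.sqrt d)^2/(sdev p0 u)^2 * (∑ s, p0 s*(expct p0 u - u s)^2) := by
          rw [Finset.sum_add_distrib, Finset.sum_add_distrib,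
            ← Finset.mul_sum, ← Finset.mul_sum]
      _ = 1 + d := by
          rw [hsum, h1, h2, hq2, hS2]
          field_simp
          ring
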